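/- Let m and p be positive integers, l = 4mp + 2p − 1 and t = 4mp − 1, so that p' = (2m+1)p − 1. Then: (i) for 1 ≤ k ≤ p', σ_{i_k} + σ_{i_{p'+1−k}} = 2 if ip + 1 ≤ k ≤ (i+1)p − 1 for some i ∈ {1, 3, …, 2m−1}; σ_{i_k} + σ_{i_{p'+1−k}} = −2 if ip + 1 ≤ k ≤ (i+1)p − 1 for some i ∈ {0, 2, …, 2m}; and σ_{i_k} + σ_{i_{p'+1−k}} = 0 if k = ip for some i ∈ {1, 2, …, 2m}. (ii) For 1 ≤ j ≤ p' − 1, σ_{j+1} + σ_{p'+1−j} = −2 if j ≡ m (mod 2m+1), and σ_{j+1} + σ_{p'+1−j} = 0 otherwise. -/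
import Mathlib

set_option maxHeartbeats 1600000


/-- `σ_j = (-1)^{⌊(2j-1)t/l⌋}`. -/
def sigmaF (l t j : ℕ) : ℤ := (-1) ^ ((2 * j - 1) * t / l)

/-- `r(j)`: the unique integer with `r(j) ≡ (2j-1)t (mod 2l)` and `-l < r(j) < l`. -/
def rF (l t j : ℕ) : ℤ :=
  if (((2 * j - 1) * t : ℕ) : ℤ) % (2 * l) < l then (((2 * j - 1) * t : ℕ) : ℤ) % (2 * l)
  else (((2 * j - 1) * t : ℕ) : ℤ) % (2 * l) - 2 * l

/-- `r'(j) = (|r(j)| + 1)/2`. -/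
def rpF (l t j : ℕ) : ℤ := (|rF l t j| + 1) / 2

theorem ndiv_eq (x y q r : ℕ) (h : x = q*y + r) (hr : r < y) : x / y = q := by
  apply Nat.div_eq_of_lt_le
  · omega
  · have e : (q+1)*y = q*y + y := by ring
    omega

theorem nmod_eq (x y q r : ℕ) (h : x = q*y + r) (hr : r < y) : x % y = r := by
  subst h
  rw [Nat.mul_comm, Nat.add_comm, Nat.add_mul_mod_self_left, Nat.mod_eq_of_lt hr]


theorem rF_pos (l t j n c : ℕ) (hn : 2*j-1 = n) (hc1 : 1 ≤ c) (hc2 : c + 1 ≤ l)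
    (hmodv : (n*t) % (2*l) = l - c) : rF l t j = (l:ℤ) - (c:ℤ) := by
  have h2 : (((2*j-1)*t : ℕ):ℤ) % (2*(l:ℤ)) = ((l - c : ℕ) : ℤ) := by
    rw [hn, show (2*(l:ℤ)) = ((2*l : ℕ):ℤ) from by push_cast; ring,
      ← Int.natCast_mod, hmodv]
  simp only [rF, h2]
  rw [if_pos (by exact_mod_cast (show l - c < l from by omega))]
  omega

theorem rF_neg (l t j n c : ℕ) (hn : 2*j-1 = n) (hc1 : 1 ≤ c) (hc2 : c + 1 ≤ l)
    (hmodv : (n*t) % (2*l) = 2*l - c) : rF l t j = -(c:ℤ) := by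
  have h2 : (((2*j-1)*t : ℕ):ℤ) % (2*(l:ℤ)) = ((2*l - c : ℕ) : ℤ) := by
    rw [hn, show (2*(l:ℤ)) = ((2*l : ℕ):ℤ) from by push_cast; ring,
      ← Int.natCast_mod, hmodv]
  simp only [rF, h2]
  rw [if_neg (by push_neg; exact_mod_cast (show l ≤ 2*l - c from by omega))]
  omega

theorem core (m p l t j : ℕ) (hm : 1 ≤ m) (hp : 1 ≤ p)
    (hl : l = 4*m*p + 2*p - 1) (ht : t = 4*m*p - 1)
    (hj1 : 1 ≤ j) (hj2 : j ≤ (2*m+1)*p - 1) :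
    ∃ a b c : ℕ, (2*j-1) = (2*m+1)*a + b ∧ b < 2*m+1 ∧ c = a + 2*p*b ∧
      1 ≤ c ∧ c + 1 ≤ l ∧ (2*j-1)/(2*m+1) = a ∧
      (2*m+1)*c = b*l + (2*j-1) ∧ (2*j-1) + 2 ≤ l ∧ l % 2 = 1 ∧
      sigmaF l t j = (-1)^a ∧
      (a % 2 = 0 → rF l t j = (l:ℤ) - (c:ℤ)) ∧
      (a % 2 = 1 → rF l t j = -(c:ℤ)) := by
  have hmp : 1 ≤ m*p := by nlinarith
  have h1 : 1 ≤ 4*m*p + 2*p := by nlinarith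
  have h1t : 1 ≤ 4*m*p := by nlinarith
  have hl1 : l + 1 = (2*m+1)*(2*p) := by rw [hl, Nat.sub_add_cancel h1]; ring
  have ht1 : t + 1 = 4*m*p := by rw [ht, Nat.sub_add_cancel h1t]
  have htl : t + 2*p = l := by
    have e : (2*m+1)*(2*p) = 4*m*p + 2*p := by ring
    omega
  have hlodd : l % 2 = 1 := by
    have e : (2*m+1)*(2*p) = 2*((2*m+1)*p) := by ring
    omega
  obtain ⟨n, hn⟩ : ∃ n, 2*j-1 = n := ⟨_, rfl⟩
  have hnodd : n % 2 = 1 := by omega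
  have hn2 : n + 2 ≤ l := by
    have e : (2*m+1)*(2*p) = 2*((2*m+1)*p) := by ring
    omega
  obtain ⟨a, ha⟩ : ∃ a, n / (2*m+1) = a := ⟨_, rfl⟩
  obtain ⟨b, hb⟩ : ∃ b, n % (2*m+1) = b := ⟨_, rfl⟩
  have hab : n = (2*m+1)*a + b := by
    rw [← ha, ← hb]; exact (Nat.div_add_mod n (2*m+1)).symm
  have hblt : b < 2*m+1 := hb ▸ Nat.mod_lt _ (by omega)
  have hab' : n = 2*(m*a) + a + b := by rw [hab]; ring
  have hma : a ≤ m*a := Nat.le_mul_of_pos_left a hm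
  obtain ⟨q, hq⟩ : ∃ q, n = q + a + 1 := ⟨n - a - 1, by omega⟩
  have hq1 : q + 1 = 2*(m*a) + b := by omega
  obtain ⟨c, hc⟩ : ∃ c, c = a + 2*p*b := ⟨_, rfl⟩
  have hc' : c = a + 2*(p*b) := by rw [hc]; ring
  have hpb : b ≤ p*b := Nat.le_mul_of_pos_left b hp
  have hc1 : 1 ≤ c := by omega
  have hmulaa : (2*m+1)*a = 2*(m*a) + a := by ring
  obtain ⟨P2, hP2⟩ : ∃ P2, 2*p = P2 + 1 := ⟨2*p - 1, by omega⟩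
  have hl1' : l + 1 = (2*m+1)*P2 + 2*m + 1 := by
    rw [hl1, hP2]; ring
  have ha2p : a + 1 ≤ 2*p := by
    by_contra h
    push_neg at h
    have h2 : (2*m+1)*(2*p) ≤ (2*m+1)*a := Nat.mul_le_mul_left _ (by omega)
    omega
  have hc2 : c + 1 ≤ l := by
    rcases Nat.lt_or_ge b (2*m) with hb2 | hb2
    · have h3 : p*(b+1) ≤ p*(2*m) := Nat.mul_le_mul_left _ (by omega)
      have e1 : p*(b+1) = p*b + p := by ring
      have e2 : p*(2*m) = 2*(m*p) := by ring
      have e3 : (2*m+1)*(2*p) = 4*(m*p) + 2*p := by ring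
      omega
    · have hbe : b = 2*m := by omega
      have ha2 : a + 2 ≤ 2*p := by
        by_contra h
        push_neg at h
        have h2 : (2*m+1)*P2 ≤ (2*m+1)*a := Nat.mul_le_mul_left _ (by omega)
        omega
      have e2 : p*b = 2*(m*p) := by rw [hbe]; ring
      have e3 : (2*m+1)*(2*p) = 4*(m*p) + 2*p := by ring
      omega
  have hid : (2*m+1)*c = b*l + n := by
    have e1 : (2*m+1)*c = (2*m+1)*a + ((2*m+1)*(2*p))*b := by rw [hc]; ring
    rw [e1, ← hl1]
    have e2 : (l+1)*b = b*l + b := by ring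
    omega
  have key : n*t + c = (q+1)*l := by
    zify
    have zn : (n:ℤ) = (2*m+1)*a + b := by exact_mod_cast hab
    have zq : (q:ℤ) + 1 = 2*(m*a) + b := by exact_mod_cast hq1
    have zt : (t:ℤ) + 2*p = l := by exact_mod_cast htl
    have ht1' : t + 1 = 4*(m*p) := by rw [ht1]; ring
    have ztp : (t:ℤ) + 1 = 4*(m*p) := by exact_mod_cast ht1'
    have zc : (c:ℤ) = a + 2*p*b := by exact_mod_cast hc
    linear_combination (t:ℤ)*zn - (l:ℤ)*zq + (2*(m:ℤ)*(a:ℤ)+(b:ℤ))*zt + (a:ℤ)*ztp + zc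
  have hdivq : n*t / l = q := by
    apply ndiv_eq _ _ _ (l - c)
    · have e : (q+1)*l = q*l + l := by ring
      clear * - key hc1 hc2 e
      omega
    · clear * - hc1 hc2
      omega
  have hqa : q % 2 = a % 2 := by clear * - hq hnodd; omega
  have hsig : sigmaF l t j = (-1)^a := by
    simp only [sigmaF]
    rw [hn, hdivq]
    rcases Nat.even_or_odd a with h | h
    · rw [h.neg_one_pow, Even.neg_one_pow (Nat.even_iff.mpr (by
        rw [Nat.even_iff] at h; omega))]
    · rw [h.neg_one_pow, Odd.neg_one_pow (Nat.odd_iff.mpr (by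
        rw [Nat.odd_iff] at h; omega))]
  refine ⟨a, b, c, by rw [hn]; exact hab, hblt, hc, hc1, hc2, by rw [hn]; exact ha,
    by rw [hn]; exact hid, by clear * - hn hn2; omega, hlodd, hsig, ?_, ?_⟩
  · intro h0
    apply rF_pos l t j n c hn hc1 hc2
    obtain ⟨Q, hQ⟩ : ∃ Q, q = 2*Q := ⟨q/2, by clear * - hqa h0; omega⟩
    apply nmod_eq _ _ Q _
    · have e : (q+1)*l = 2*(Q*l) + l := by rw [hQ]; ring
      have e2 : Q*(2*l) = 2*(Q*l) := by ring
      clear * - key hc1 hc2 e e2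
      omega
    · clear * - hc1 hc2
      omega
  · intro h0
    apply rF_neg l t j n c hn hc1 hc2
    obtain ⟨Q, hQ⟩ : ∃ Q, q = 2*Q + 1 := ⟨q/2, by clear * - hqa h0; omega⟩
    apply nmod_eq _ _ Q _
    · have e : (q+1)*l = 2*(Q*l) + 2*l := by rw [hQ]; ring
      have e2 : Q*(2*l) = 2*(Q*l) := by ring
      clear * - key hc1 hc2 e e2
      omega
    · clear * - hc1 hc2
      omega

theorem sigma_eq (m p l t j : ℕ) (hm : 1 ≤ m) (hp : 1 ≤ p)
    (hl : l = 4*m*p + 2*p - 1) (ht : t = 4*m*p - 1)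
    (hj1 : 1 ≤ j) (hj2 : j ≤ (2*m+1)*p - 1) :
    sigmaF l t j = (-1)^((2*j-1)/(2*m+1)) := by
  obtain ⟨a, b, c, hab, hblt, hc, hc1, hc2, hdiva, hid, hnl, hlodd, hsig, h0, h1⟩ :=
    core m p l t j hm hp hl ht hj1 hj2
  rw [hdiva]; exact hsig

theorem sigmaB (m p l t j k : ℕ) (hm : 1 ≤ m) (hp : 1 ≤ p)
    (hl : l = 4*m*p + 2*p - 1) (ht : t = 4*m*p - 1)
    (hj1 : 1 ≤ j) (hj2 : j ≤ (2*m+1)*p - 1) (hk : rpF l t j = (k:ℤ)) :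
    sigmaF l t j = (-1)^((2*m+1)*(2*k-1)/l + 1) := by
  obtain ⟨a, b, c, hab, hblt, hc, hc1, hc2, hdiva, hid, hnl, hlodd, hsig, h0, h1⟩ :=
    core m p l t j hm hp hl ht hj1 hj2
  have hnodd : (2*j-1) % 2 = 1 := by clear * - hj1; omega
  have hcpar : c % 2 = a % 2 := by
    have e : c = a + 2*(p*b) := by rw [hc]; ring
    clear * - e; omega
  have habpar : (a + b) % 2 = 1 := by
    have e : 2*j - 1 = 2*(m*a) + a + b := by rw [hab]; ring
    clear * - e hnodd; omega
  rcases Nat.mod_two_eq_zero_or_one a with ha | ha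
  · have hr := h0 ha
    simp only [rpF, hr] at hk
    rw [abs_of_nonneg (show (0:ℤ) ≤ (l:ℤ) - (c:ℤ) from by clear * - hc2; omega)] at hk
    have hk2 : 2*k + c = l + 1 := by clear * - hk hcpar ha hlodd hc2; omega
    have hk1 : 1 ≤ k := by clear * - hk2 hc2; omega
    have hK : (2*k - 1) + c = l := by clear * - hk2 hk1; omega
    have h6 : (2*m+1)*(2*k-1) + (2*m+1)*c = (2*m+1)*l := by
      rw [← Nat.mul_add, hK]
    have e1 : (2*m+1)*l = 2*(m*l) + l := by ring
    have e2 : (2*m-b)*l + b*l = 2*(m*l) := by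
      rw [← Nat.add_mul, show 2*m-b+b = 2*m from by clear * - hblt; omega]; ring
    have hdivK : (2*m+1)*(2*k-1)/l = 2*m - b := by
      apply ndiv_eq _ _ _ (l - (2*j-1))
      · clear * - h6 hid e1 e2 hnl
        omega
      · clear * - hnl hj1; omega
    rw [hdivK, hsig]
    have hbodd : b % 2 = 1 := by clear * - habpar ha; omega
    rw [Even.neg_one_pow (Nat.even_iff.mpr ha),
      Even.neg_one_pow (Nat.even_iff.mpr (show (2*m-b+1) % 2 = 0 from by
        clear * - hbodd hblt; omega))]
  · have hr := h1 ha
    simp only [rpF, hr, abs_neg] at hk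
    rw [abs_of_nonneg (show (0:ℤ) ≤ (c:ℤ) from by positivity)] at hk
    have hk2 : 2*k = c + 1 := by clear * - hk hcpar ha; omega
    have hK : 2*k - 1 = c := by clear * - hk2; omega
    have hdivK : (2*m+1)*(2*k-1)/l = b := by
      rw [hK]
      apply ndiv_eq _ _ _ (2*j-1) hid
      clear * - hnl; omega
    rw [hdivK, hsig]
    have hbev : b % 2 = 0 := by clear * - habpar ha; omega
    rw [Odd.neg_one_pow (Nat.odd_iff.mpr ha),
      Odd.neg_one_pow (Nat.odd_iff.mpr (show (b+1) % 2 = 1 from by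
        clear * - hbev; omega))]

theorem stmt5 (m p l t p' : ℕ) (hm : 1 ≤ m) (hp : 1 ≤ p)
    (hl : l = 4*m*p + 2*p - 1) (ht : t = 4*m*p - 1) (hp' : p' = (2*m+1)*p - 1)
    (I : ℕ → ℕ)
    (hI : ∀ k : ℕ, 1 ≤ k → k ≤ p' → 1 ≤ I k ∧ I k ≤ p' ∧ rpF l t (I k) = (k : ℤ)) :
    (∀ k i : ℕ, 1 ≤ k → k ≤ p' → i % 2 = 1 → i ≤ 2*m - 1 →
        i*p + 1 ≤ k → k ≤ (i+1)*p - 1 →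
        sigmaF l t (I k) + sigmaF l t (I (p' + 1 - k)) = 2) ∧
    (∀ k i : ℕ, 1 ≤ k → k ≤ p' → i % 2 = 0 → i ≤ 2*m →
        i*p + 1 ≤ k → k ≤ (i+1)*p - 1 →
        sigmaF l t (I k) + sigmaF l t (I (p' + 1 - k)) = -2) ∧
    (∀ i : ℕ, 1 ≤ i → i ≤ 2*m →
        sigmaF l t (I (i*p)) + sigmaF l t (I (p' + 1 - i*p)) = 0) ∧
    (∀ j : ℕ, 1 ≤ j → j ≤ p' - 1 →
        sigmaF l t (j+1) + sigmaF l t (p' + 1 - j) =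
          if j % (2*m+1) = m then -2 else 0) := by
  have hmp : 1 ≤ m*p := by nlinarith
  have h1 : 1 ≤ 4*m*p + 2*p := by nlinarith
  have hl1 : l + 1 = (2*m+1)*(2*p) := by rw [hl, Nat.sub_add_cancel h1]; ring
  have hpp : 1 ≤ (2*m+1)*p := by nlinarith
  have hpX : p' + 1 = (2*m+1)*p := by rw [hp', Nat.sub_add_cancel hpp]
  have hlp' : 2*p' + 1 = l := by
    have e : (2*m+1)*(2*p) = 2*((2*m+1)*p) := by ring
    clear * - e hl1 hpX; omega
  have zl : ((l:ℤ)+1) = (2*(m:ℤ)+1)*(2*(p:ℤ)) := by exact_mod_cast hl1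
  have hlge : 2*m+1 ≤ l := by
    have h2 : (2*m+1)*2 ≤ (2*m+1)*(2*p) := Nat.mul_le_mul_left _ (by omega)
    clear * - h2 hl1; omega
  have zlge : (2*(m:ℤ)+1) ≤ (l:ℤ) := by exact_mod_cast hlge
  have hsigI : ∀ k, 1 ≤ k → k ≤ p' →
      sigmaF l t (I k) = (-1)^((2*m+1)*(2*k-1)/l + 1) := by
    intro k hk1 hk2
    obtain ⟨h1', h2', h3'⟩ := hI k hk1 hk2
    exact sigmaB m p l t (I k) k hm hp hl ht h1' (by clear * - h2' hpX; omega) h3'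
  have hdA : ∀ k i : ℕ, i ≤ 2*m → i*p+1 ≤ k → k ≤ (i+1)*p-1 →
      (2*m+1)*(2*k-1)/l = i := by
    intro k i hi hkl hkr
    have hk1 : 1 ≤ k := by clear * - hkl; omega
    have hkr' : k + 1 ≤ (i+1)*p := by clear * - hkr hk1; omega
    have zkl : ((i:ℤ))*(p:ℤ)+1 ≤ (k:ℤ) := by exact_mod_cast hkl
    have zkr : ((k:ℤ))+1 ≤ ((i:ℤ)+1)*(p:ℤ) := by exact_mod_cast hkr'
    have zi2m : (i:ℤ) ≤ 2*(m:ℤ) := by exact_mod_cast hi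
    have hP : (0:ℤ) ≤ (2*(m:ℤ)+1)*((k:ℤ) - (i:ℤ)*(p:ℤ) - 1) :=
      mul_nonneg (by positivity) (by linarith)
    have hQ : (0:ℤ) ≤ (2*(m:ℤ)+1)*(((i:ℤ)+1)*(p:ℤ) - (k:ℤ) - 1) :=
      mul_nonneg (by positivity) (by linarith)
    have zi1 : ((i:ℤ))*((l:ℤ)+1) = (i:ℤ)*((2*(m:ℤ)+1)*(2*(p:ℤ))) := by rw [zl]
    have zi2 : ((i:ℤ)+1)*((l:ℤ)+1) = ((i:ℤ)+1)*((2*(m:ℤ)+1)*(2*(p:ℤ))) := by rw [zl]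
    apply Nat.div_eq_of_lt_le
    · zify [show 1 ≤ 2*k from by clear * - hk1; omega]
      linarith [hP, zi1, mul_nonneg (show (0:ℤ) ≤ 2*(m:ℤ)+1 from by positivity) (show (0:ℤ) ≤ (i:ℤ) from by positivity)]
    · zify [show 1 ≤ 2*k from by clear * - hk1; omega]
      linarith [hQ, zi2, zi2m]
  have hdB : ∀ k i : ℕ, i ≤ 2*m → i*p+1 ≤ k → k ≤ (i+1)*p-1 →
      (2*m+1)*(l - 2*k)/l = 2*m - i := by
    intro k i hi hkl hkr
    have hk1 : 1 ≤ k := by clear * - hkl; omega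
    have hkr' : k + 1 ≤ (i+1)*p := by clear * - hkr hk1; omega
    have h2kl : 2*k + 1 ≤ l := by
      have h3 : (i+1)*p ≤ (2*m+1)*p := Nat.mul_le_mul_right p (by clear * - hi; omega)
      have e : (2*m+1)*(2*p) = 2*((2*m+1)*p) := by ring
      clear * - h3 e hl1 hkr'; omega
    have zkl : ((i:ℤ))*(p:ℤ)+1 ≤ (k:ℤ) := by exact_mod_cast hkl
    have zkr : ((k:ℤ))+1 ≤ ((i:ℤ)+1)*(p:ℤ) := by exact_mod_cast hkr'
    have zi2m : (i:ℤ) ≤ 2*(m:ℤ) := by exact_mod_cast hi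
    have hP : (0:ℤ) ≤ (2*(m:ℤ)+1)*((k:ℤ) - (i:ℤ)*(p:ℤ) - 1) :=
      mul_nonneg (by positivity) (by linarith)
    have hQ : (0:ℤ) ≤ (2*(m:ℤ)+1)*(((i:ℤ)+1)*(p:ℤ) - (k:ℤ) - 1) :=
      mul_nonneg (by positivity) (by linarith)
    have zi1 : ((i:ℤ))*((l:ℤ)+1) = (i:ℤ)*((2*(m:ℤ)+1)*(2*(p:ℤ))) := by rw [zl]
    have zi2 : ((i:ℤ)+1)*((l:ℤ)+1) = ((i:ℤ)+1)*((2*(m:ℤ)+1)*(2*(p:ℤ))) := by rw [zl]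
    apply Nat.div_eq_of_lt_le
    · zify [show 2*k ≤ l from by clear * - h2kl; omega, hi]
      linarith [hQ, zi2, zi2m]
    · zify [show 2*k ≤ l from by clear * - h2kl; omega, hi]
      linarith [hP, zi1, mul_nonneg (show (0:ℤ) ≤ 2*(m:ℤ)+1 from by positivity) (show (0:ℤ) ≤ (i:ℤ) from by positivity)]
  have hsum : ∀ k i : ℕ, 1 ≤ k → k ≤ p' → i ≤ 2*m → i*p+1 ≤ k → k ≤ (i+1)*p-1 →
      sigmaF l t (I k) + sigmaF l t (I (p'+1-k)) = (-1)^(i+1) + (-1)^(2*m-i+1) := by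
    intro k i hk1 hk2 hi hkl hkr
    have e0 : 2*(p'+1-k) - 1 = l - 2*k := by clear * - hlp' hk2 hk1; omega
    rw [hsigI k hk1 hk2,
      hsigI (p'+1-k) (by clear * - hk2; omega) (by clear * - hk1; omega), e0,
      hdA k i hi hkl hkr, hdB k i hi hkl hkr]
  refine ⟨?_, ?_, ?_, ?_⟩
  · intro k i hk1 hk2 hipar hi hkl hkr
    rw [hsum k i hk1 hk2 (by clear * - hi hipar; omega) hkl hkr]
    rw [Even.neg_one_pow (Nat.even_iff.mpr (show (i+1) % 2 = 0 from by
        clear * - hipar; omega)),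
      Even.neg_one_pow (Nat.even_iff.mpr (show (2*m-i+1) % 2 = 0 from by
        clear * - hipar hi; omega))]
    norm_num
  · intro k i hk1 hk2 hipar hi hkl hkr
    rw [hsum k i hk1 hk2 hi hkl hkr]
    rw [Odd.neg_one_pow (Nat.odd_iff.mpr (show (i+1) % 2 = 1 from by
        clear * - hipar; omega)),
      Odd.neg_one_pow (Nat.odd_iff.mpr (show (2*m-i+1) % 2 = 1 from by
        clear * - hipar hi; omega))]
    norm_num
  · intro i hi1 hi2
    have hk1 : 1 ≤ i*p := by
      have := Nat.mul_le_mul hi1 hp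
      simpa using this
    have h3 : i*p ≤ 2*m*p := Nat.mul_le_mul_right p hi2
    have hk2 : i*p ≤ p' := by
      have e : (2*m+1)*p = 2*m*p + p := by ring
      clear * - h3 e hpX hp; omega
    have h2ipl : 2*(i*p) + 1 ≤ l := by
      clear * - hk2 hlp'; omega
    have e0 : 2*(p'+1-i*p) - 1 = l - 2*(i*p) := by clear * - hlp' hk2 hk1; omega
    rw [hsigI (i*p) hk1 hk2,
      hsigI (p'+1-i*p) (by clear * - hk2; omega) (by clear * - hk1; omega), e0]
    have zi1 : ((i:ℤ))*((l:ℤ)+1) = (i:ℤ)*((2*(m:ℤ)+1)*(2*(p:ℤ))) := by rw [zl]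
    have zi2m : (i:ℤ) ≤ 2*(m:ℤ) := by exact_mod_cast hi2
    have zi1' : (1:ℤ) ≤ (i:ℤ) := by exact_mod_cast hi1
    have hd1 : (2*m+1)*(2*(i*p)-1)/l = i - 1 := by
      apply Nat.div_eq_of_lt_le
      · zify [show 1 ≤ 2*(i*p) from by clear * - hk1; omega, hi1]
        linarith [zi1, zlge, zi1']
      · zify [show 1 ≤ 2*(i*p) from by clear * - hk1; omega, hi1]
        linarith [zi1, zi2m]
    have hd2 : (2*m+1)*(l - 2*(i*p))/l = 2*m - i := by
      apply Nat.div_eq_of_lt_le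
      · zify [show 2*(i*p) ≤ l from by clear * - h2ipl; omega, hi2]
        linarith [zi1, zlge, zi2m]
      · zify [show 2*(i*p) ≤ l from by clear * - h2ipl; omega, hi2]
        linarith [zi1, zi1']
    rw [hd1, hd2, show i - 1 + 1 = i from by clear * - hi1; omega]
    rcases Nat.even_or_odd i with h | h
    · rw [h.neg_one_pow, Odd.neg_one_pow (Nat.odd_iff.mpr (show (2*m-i+1) % 2 = 1 from by
        have := Nat.even_iff.mp h; clear * - this hi2; omega))]
      ring
    · rw [h.neg_one_pow, Even.neg_one_pow (Nat.even_iff.mpr (show (2*m-i+1) % 2 = 0 from by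
        have := Nat.odd_iff.mp h; clear * - this hi2; omega))]
      ring
  · intro j hj1 hjp
    have hjp' : j + 1 ≤ p' := by clear * - hj1 hjp; omega
    have hs1 : sigmaF l t (j+1) = (-1)^((2*(j+1)-1)/(2*m+1)) :=
      sigma_eq m p l t (j+1) hm hp hl ht (by clear * - hj1; omega)
        (by clear * - hjp' hpX; omega)
    have hs2 : sigmaF l t (p'+1-j) = (-1)^((2*(p'+1-j)-1)/(2*m+1)) :=
      sigma_eq m p l t (p'+1-j) hm hp hl ht (by clear * - hjp'; omega)
        (by clear * - hjp' hpX hj1; omega)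
    obtain ⟨c, hcdef⟩ : ∃ c, 2*j/(2*m+1) = c := ⟨_, rfl⟩
    obtain ⟨d, hddef⟩ : ∃ d, 2*j%(2*m+1) = d := ⟨_, rfl⟩
    have hcd : 2*j = (2*m+1)*c + d := by
      rw [← hcdef, ← hddef]; exact (Nat.div_add_mod _ _).symm
    have hdlt : d < 2*m+1 := hddef ▸ Nat.mod_lt _ (by omega)
    have hcd' : (c + d) % 2 = 0 := by
      have e : 2*j = 2*(m*c) + c + d := by rw [hcd]; ring
      clear * - e; omega
    have hcub : c + 1 ≤ 2*p := by
      by_contra h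
      push_neg at h
      have h2 : (2*m+1)*(2*p) ≤ (2*m+1)*c := Nat.mul_le_mul_left _ (by omega)
      clear * - h2 hcd hl1 hlp' hjp'
      omega
    obtain ⟨e, he⟩ : ∃ e, c + e + 1 = 2*p := ⟨2*p - c - 1, by clear * - hcub; omega⟩
    have hLd : l - 2*j = e*(2*m+1) + (2*m - d) := by
      have e1 : (2*m+1)*(2*p) = (2*m+1)*c + e*(2*m+1) + (2*m+1) := by
        rw [← he]; ring
      clear * - e1 hcd hl1 hdlt hlp' hjp'
      omega
    have hdiv2 : (2*(p'+1-j)-1)/(2*m+1) = e := by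
      rw [show 2*(p'+1-j)-1 = l - 2*j from by clear * - hlp' hjp' hj1; omega]
      exact ndiv_eq _ _ _ _ hLd (by clear * - hdlt; omega)
    rcases eq_or_ne d (2*m) with hd | hd
    · have hdiv1 : (2*(j+1)-1)/(2*m+1) = c + 1 := by
        apply ndiv_eq _ _ _ 0
        · have e2 : (c+1)*(2*m+1) = (2*m+1)*c + (2*m+1) := by ring
          clear * - e2 hcd hd hj1; omega
        · clear * - hm; omega
      have hceven : c % 2 = 0 := by clear * - hcd' hd; omega
      have hmod : j % (2*m+1) = m := by
        obtain ⟨c2, hc2⟩ : ∃ c2, c = 2*c2 := ⟨c/2, by clear * - hceven; omega⟩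
        have e3 : 2*(c2*(2*m+1)) = (2*m+1)*c := by rw [hc2]; ring
        have hj : j = c2*(2*m+1) + m := by clear * - e3 hcd hd; omega
        exact nmod_eq _ _ _ _ hj (by clear * - hm; omega)
      rw [if_pos hmod, hs1, hs2, hdiv1, hdiv2]
      rw [Odd.neg_one_pow (Nat.odd_iff.mpr (show (c+1) % 2 = 1 from by
          clear * - hceven; omega)),
        Odd.neg_one_pow (Nat.odd_iff.mpr (show e % 2 = 1 from by
          clear * - he hceven; omega))]
      ring
    · have hdiv1 : (2*(j+1)-1)/(2*m+1) = c := by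
        apply ndiv_eq _ _ _ (d+1)
        · have e2 : c*(2*m+1) = (2*m+1)*c := by ring
          clear * - e2 hcd hj1; omega
        · clear * - hdlt hd; omega
      have hmod : j % (2*m+1) ≠ m := by
        rcases Nat.mod_two_eq_zero_or_one d with hdp | hdp
        · have hcev : c % 2 = 0 := by clear * - hcd' hdp; omega
          obtain ⟨c2, hc2⟩ : ∃ c2, c = 2*c2 := ⟨c/2, by clear * - hcev; omega⟩
          obtain ⟨d2, hd2⟩ : ∃ d2, d = 2*d2 := ⟨d/2, by clear * - hdp; omega⟩
          have hjm : j % (2*m+1) = d2 := by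
            have e3 : 2*(c2*(2*m+1)) = (2*m+1)*c := by rw [hc2]; ring
            have hj : j = c2*(2*m+1) + d2 := by clear * - e3 hcd hd2; omega
            exact nmod_eq _ _ _ _ hj (by clear * - hd2 hdlt; omega)
          clear * - hjm hd hd2
          omega
        · have hcod : c % 2 = 1 := by clear * - hcd' hdp; omega
          obtain ⟨c2, hc2⟩ : ∃ c2, c = 2*c2+1 := ⟨c/2, by clear * - hcod; omega⟩
          have hjm : j % (2*m+1) = m + (d+1)/2 := by
            have e3 : (2*m+1)*c = 2*(c2*(2*m+1)) + (2*m+1) := by rw [hc2]; ring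
            have hj : j = c2*(2*m+1) + (m + (d+1)/2) := by clear * - e3 hcd hdp; omega
            exact nmod_eq _ _ _ _ hj (by clear * - hdp hdlt; omega)
          clear * - hjm hdp
          omega
      rw [if_neg hmod, hs1, hs2, hdiv1, hdiv2]
      rcases Nat.even_or_odd c with h | h
      · rw [h.neg_one_pow, Odd.neg_one_pow (Nat.odd_iff.mpr (show e % 2 = 1 from by
          have := Nat.even_iff.mp h; clear * - this he; omega))]
        ring
      · rw [h.neg_one_pow, Even.neg_one_pow (Nat.even_iff.mpr (show e % 2 = 0 from by
          have := Nat.odd_iff.mp h; clear * - this he; omega))]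
        ring
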